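/- Weight of the edge E_{i_j}E_{i_{j+1}} of the tropical secant graph: For every 1 ≤ j ≤ n−2, the gcd of all 4×4 minors of the (n+1)×4 integer matrix with columns E_{i_j}, E_{i_{j+1}}, 𝟏, l₂ equals (i_{j+1} − i_j) · gcd(i_1, …, i_j) · gcd_{j < t < n}(i_n − i_t). (Dividing by the index (i_{j+1} − i_j)·gcd(i_1, …, i_j) of the lattice ℤ⟨E_{i_j}, E_{i_{j+1}}⟩ in its saturation — that index being the gcd of the 2×2 minors of the matrix with rows E_{i_j}, E_{i_{j+1}} — yields the tropical multiplicity m_{E_{i_j}, E_{i_{j+1}}} = gcd(i_1, …, i_j)·gcd_{j < t < n}(i_n − i_t).) -/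

import Mathlib

theorem my_det_fin_four (M : Matrix (Fin 4) (Fin 4) ℤ) : M.det =
    M 0 0 * (M 1 1 * (M 2 2 * M 3 3 - M 2 3 * M 3 2)
      - M 1 2 * (M 2 1 * M 3 3 - M 2 3 * M 3 1)
      + M 1 3 * (M 2 1 * M 3 2 - M 2 2 * M 3 1))
  - M 0 1 * (M 1 0 * (M 2 2 * M 3 3 - M 2 3 * M 3 2)
      - M 1 2 * (M 2 0 * M 3 3 - M 2 3 * M 3 0)
      + M 1 3 * (M 2 0 * M 3 2 - M 2 2 * M 3 0))
  + M 0 2 * (M 1 0 * (M 2 1 * M 3 3 - M 2 3 * M 3 1)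
      - M 1 1 * (M 2 0 * M 3 3 - M 2 3 * M 3 0)
      + M 1 3 * (M 2 0 * M 3 1 - M 2 1 * M 3 0))
  - M 0 3 * (M 1 0 * (M 2 1 * M 3 2 - M 2 2 * M 3 1)
      - M 1 1 * (M 2 0 * M 3 2 - M 2 2 * M 3 0)
      + M 1 2 * (M 2 0 * M 3 1 - M 2 1 * M 3 0)) := by
  rw [Matrix.det_succ_row_zero]
  simp [Fin.sum_univ_succ, Matrix.det_fin_three, Matrix.submatrix,
    show (Fin.succ 2 : Fin 4) = 3 from rfl,
    show (Fin.castSucc 2 : Fin 4) = 2 from rfl,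
    show Fin.succAbove (2 : Fin 4) 2 = 3 from rfl,
    show Fin.succAbove (1 : Fin 4) 2 = 3 from rfl,
    show Fin.succAbove (3 : Fin 4) 2 = 2 from rfl]
  ring

lemma dvd_of_eq_or_neg {c x y : ℤ} (h : c ∣ x) (h2 : y = x ∨ y = -x) : c ∣ y := by
  rcases h2 with h2 | h2 <;> rw [h2] <;> [exact h; exact dvd_neg.mpr h]

lemma key (D G1 G2 p W : ℤ) (N : Fin 4 → Fin 4 → ℤ)
    (h : ∀ s, (∃ a, G1 ∣ a ∧ N s = ![a, a, 1, a]) ∨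
              (∃ v, G2 ∣ v ∧ N s = ![p, p + D, 1, W + v])) :
    D * G1 * G2 ∣ (Matrix.of N).det := by
  rcases h 0 with ⟨a0, ha0, e0⟩ | ⟨v0, hv0, e0⟩
  · rcases h 1 with ⟨a1, ha1, e1⟩ | ⟨v1, hv1, e1⟩
    · rcases h 2 with ⟨a2, ha2, e2⟩ | ⟨v2, hv2, e2⟩
      · rcases h 3 with ⟨a3, ha3, e3⟩ | ⟨v3, hv3, e3⟩
        · rw [my_det_fin_four]
          simp only [Matrix.of_apply, e0, e1, e2, e3, Matrix.cons_val_zero, Matrix.cons_val_one,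
            Matrix.head_cons, Matrix.cons_val_two, Matrix.tail_cons, Matrix.cons_val_three]
          refine dvd_of_eq_or_neg (dvd_zero _) (Or.inl ?_)
          first | ring1 | (ring_nf; done)
        · rw [my_det_fin_four]
          simp only [Matrix.of_apply, e0, e1, e2, e3, Matrix.cons_val_zero, Matrix.cons_val_one,
            Matrix.head_cons, Matrix.cons_val_two, Matrix.tail_cons, Matrix.cons_val_three]
          refine dvd_of_eq_or_neg (dvd_zero _) (Or.inl ?_)
          first | ring1 | (ring_nf; done)
      · rcases h 3 with ⟨a3, ha3, e3⟩ | ⟨v3, hv3, e3⟩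
        · rw [my_det_fin_four]
          simp only [Matrix.of_apply, e0, e1, e2, e3, Matrix.cons_val_zero, Matrix.cons_val_one,
            Matrix.head_cons, Matrix.cons_val_two, Matrix.tail_cons, Matrix.cons_val_three]
          refine dvd_of_eq_or_neg (dvd_zero _) (Or.inl ?_)
          first | ring1 | (ring_nf; done)
        · rw [my_det_fin_four]
          simp only [Matrix.of_apply, e0, e1, e2, e3, Matrix.cons_val_zero, Matrix.cons_val_one,
            Matrix.head_cons, Matrix.cons_val_two, Matrix.tail_cons, Matrix.cons_val_three]
          refine dvd_of_eq_or_neg (mul_dvd_mul (mul_dvd_mul_left D (dvd_sub ha0 ha1)) (dvd_sub hv2 hv3)) ?_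
          first | (left; ring1) | (left; ring_nf; done) | (right; ring1) | (right; ring_nf; done)
    · rcases h 2 with ⟨a2, ha2, e2⟩ | ⟨v2, hv2, e2⟩
      · rcases h 3 with ⟨a3, ha3, e3⟩ | ⟨v3, hv3, e3⟩
        · rw [my_det_fin_four]
          simp only [Matrix.of_apply, e0, e1, e2, e3, Matrix.cons_val_zero, Matrix.cons_val_one,
            Matrix.head_cons, Matrix.cons_val_two, Matrix.tail_cons, Matrix.cons_val_three]
          refine dvd_of_eq_or_neg (dvd_zero _) (Or.inl ?_)
          first | ring1 | (ring_nf; done)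
        · rw [my_det_fin_four]
          simp only [Matrix.of_apply, e0, e1, e2, e3, Matrix.cons_val_zero, Matrix.cons_val_one,
            Matrix.head_cons, Matrix.cons_val_two, Matrix.tail_cons, Matrix.cons_val_three]
          refine dvd_of_eq_or_neg (mul_dvd_mul (mul_dvd_mul_left D (dvd_sub ha0 ha2)) (dvd_sub hv1 hv3)) ?_
          first | (left; ring1) | (left; ring_nf; done) | (right; ring1) | (right; ring_nf; done)
      · rcases h 3 with ⟨a3, ha3, e3⟩ | ⟨v3, hv3, e3⟩
        · rw [my_det_fin_four]
          simp only [Matrix.of_apply, e0, e1, e2, e3, Matrix.cons_val_zero, Matrix.cons_val_one,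
            Matrix.head_cons, Matrix.cons_val_two, Matrix.tail_cons, Matrix.cons_val_three]
          refine dvd_of_eq_or_neg (mul_dvd_mul (mul_dvd_mul_left D (dvd_sub ha0 ha3)) (dvd_sub hv1 hv2)) ?_
          first | (left; ring1) | (left; ring_nf; done) | (right; ring1) | (right; ring_nf; done)
        · rw [my_det_fin_four]
          simp only [Matrix.of_apply, e0, e1, e2, e3, Matrix.cons_val_zero, Matrix.cons_val_one,
            Matrix.head_cons, Matrix.cons_val_two, Matrix.tail_cons, Matrix.cons_val_three]
          refine dvd_of_eq_or_neg (dvd_zero _) (Or.inl ?_)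
          first | ring1 | (ring_nf; done)
  · rcases h 1 with ⟨a1, ha1, e1⟩ | ⟨v1, hv1, e1⟩
    · rcases h 2 with ⟨a2, ha2, e2⟩ | ⟨v2, hv2, e2⟩
      · rcases h 3 with ⟨a3, ha3, e3⟩ | ⟨v3, hv3, e3⟩
        · rw [my_det_fin_four]
          simp only [Matrix.of_apply, e0, e1, e2, e3, Matrix.cons_val_zero, Matrix.cons_val_one,
            Matrix.head_cons, Matrix.cons_val_two, Matrix.tail_cons, Matrix.cons_val_three]
          refine dvd_of_eq_or_neg (dvd_zero _) (Or.inl ?_)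
          first | ring1 | (ring_nf; done)
        · rw [my_det_fin_four]
          simp only [Matrix.of_apply, e0, e1, e2, e3, Matrix.cons_val_zero, Matrix.cons_val_one,
            Matrix.head_cons, Matrix.cons_val_two, Matrix.tail_cons, Matrix.cons_val_three]
          refine dvd_of_eq_or_neg (mul_dvd_mul (mul_dvd_mul_left D (dvd_sub ha1 ha2)) (dvd_sub hv0 hv3)) ?_
          first | (left; ring1) | (left; ring_nf; done) | (right; ring1) | (right; ring_nf; done)
      · rcases h 3 with ⟨a3, ha3, e3⟩ | ⟨v3, hv3, e3⟩
        · rw [my_det_fin_four]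
          simp only [Matrix.of_apply, e0, e1, e2, e3, Matrix.cons_val_zero, Matrix.cons_val_one,
            Matrix.head_cons, Matrix.cons_val_two, Matrix.tail_cons, Matrix.cons_val_three]
          refine dvd_of_eq_or_neg (mul_dvd_mul (mul_dvd_mul_left D (dvd_sub ha1 ha3)) (dvd_sub hv0 hv2)) ?_
          first | (left; ring1) | (left; ring_nf; done) | (right; ring1) | (right; ring_nf; done)
        · rw [my_det_fin_four]
          simp only [Matrix.of_apply, e0, e1, e2, e3, Matrix.cons_val_zero, Matrix.cons_val_one,
            Matrix.head_cons, Matrix.cons_val_two, Matrix.tail_cons, Matrix.cons_val_three]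
          refine dvd_of_eq_or_neg (dvd_zero _) (Or.inl ?_)
          first | ring1 | (ring_nf; done)
    · rcases h 2 with ⟨a2, ha2, e2⟩ | ⟨v2, hv2, e2⟩
      · rcases h 3 with ⟨a3, ha3, e3⟩ | ⟨v3, hv3, e3⟩
        · rw [my_det_fin_four]
          simp only [Matrix.of_apply, e0, e1, e2, e3, Matrix.cons_val_zero, Matrix.cons_val_one,
            Matrix.head_cons, Matrix.cons_val_two, Matrix.tail_cons, Matrix.cons_val_three]
          refine dvd_of_eq_or_neg (mul_dvd_mul (mul_dvd_mul_left D (dvd_sub ha2 ha3)) (dvd_sub hv0 hv1)) ?_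
          first | (left; ring1) | (left; ring_nf; done) | (right; ring1) | (right; ring_nf; done)
        · rw [my_det_fin_four]
          simp only [Matrix.of_apply, e0, e1, e2, e3, Matrix.cons_val_zero, Matrix.cons_val_one,
            Matrix.head_cons, Matrix.cons_val_two, Matrix.tail_cons, Matrix.cons_val_three]
          refine dvd_of_eq_or_neg (dvd_zero _) (Or.inl ?_)
          first | ring1 | (ring_nf; done)
      · rcases h 3 with ⟨a3, ha3, e3⟩ | ⟨v3, hv3, e3⟩
        · rw [my_det_fin_four]
          simp only [Matrix.of_apply, e0, e1, e2, e3, Matrix.cons_val_zero, Matrix.cons_val_one,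
            Matrix.head_cons, Matrix.cons_val_two, Matrix.tail_cons, Matrix.cons_val_three]
          refine dvd_of_eq_or_neg (dvd_zero _) (Or.inl ?_)
          first | ring1 | (ring_nf; done)
        · rw [my_det_fin_four]
          simp only [Matrix.of_apply, e0, e1, e2, e3, Matrix.cons_val_zero, Matrix.cons_val_one,
            Matrix.head_cons, Matrix.cons_val_two, Matrix.tail_cons, Matrix.cons_val_three]
          refine dvd_of_eq_or_neg (dvd_zero _) (Or.inl ?_)
          first | ring1 | (ring_nf; done)


set_option maxHeartbeats 2000000 in
/-- Weight of the edge `E_{i_j}E_{i_{j+1}}` of the tropical secant graph.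
For `1 ≤ j ≤ n-2`, the gcd of all 4×4 minors of the `(n+1)×4` integer matrix with
columns `E_{i_j}, E_{i_{j+1}}, 𝟏, l₂` equals
`(i_{j+1} − i_j)·gcd(i_1,…,i_j)·gcd_{j<t<n}(i_n − i_t)`; moreover the gcd of the
2×2 minors of the matrix with rows `E_{i_j}, E_{i_{j+1}}` (the index of the lattice
`ℤ⟨E_{i_j}, E_{i_{j+1}}⟩` in its saturation) equals `(i_{j+1} − i_j)·gcd(i_1,…,i_j)`. -/
theorem weight_of_edge_EE
    (n : ℕ) (hn : 4 ≤ n) (i : ℕ → ℤ)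
    (hi0 : i 0 = 0)
    (hmono : ∀ k, k < n → i k < i (k + 1))
    (hgcd : Finset.gcd (Finset.Icc 1 n) i = 1)
    (j : ℕ) (hj1 : 1 ≤ j) (hjn : j ≤ n - 2)
    (M : Fin (n + 1) → Fin 4 → ℤ)
    (hM : M = fun k : Fin (n + 1) =>
      ![if (k : ℕ) < j then i (k : ℕ) else i j,
        if (k : ℕ) < j + 1 then i (k : ℕ) else i (j + 1),
        1, i (k : ℕ)]) :
    Finset.gcd Finset.univ
        (fun r : Fin 4 → Fin (n + 1) => (Matrix.of fun s t => M (r s) t).det)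
      = (i (j + 1) - i j) * Finset.gcd (Finset.Icc 1 j) i
          * Finset.gcd (Finset.Ioo j n) (fun t => i n - i t)
    ∧ Finset.gcd Finset.univ
        (fun p : Fin (n + 1) × Fin (n + 1) => M p.1 0 * M p.2 1 - M p.2 0 * M p.1 1)
      = (i (j + 1) - i j) * Finset.gcd (Finset.Icc 1 j) i := by
  have hj2 : j + 2 ≤ n := by omega
  have hjn' : j < n := by omega
  have hstrict : ∀ a b : ℕ, a < b → b ≤ n → i a < i b := by
    intro a b hab hbn
    induction b with
    | zero => omega
    | succ m ih =>
      rcases Nat.lt_succ_iff_lt_or_eq.mp hab with h | h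
      · exact lt_trans (ih h (by omega)) (hmono m (by omega))
      · subst h; exact hmono a (by omega)
  have hD : (0:ℤ) < i (j+1) - i j := sub_pos.mpr (hmono j (by omega))
  set G1 := Finset.gcd (Finset.Icc 1 j) i with hG1def
  set G2 := Finset.gcd (Finset.Ioo j n) (fun t => i n - i t) with hG2def
  have hG1 : ∀ k : ℕ, k ≤ j → G1 ∣ i k := by
    intro k hk
    rcases Nat.eq_zero_or_pos k with rfl | hkpos
    · rw [hi0]; exact dvd_zero _
    · exact Finset.gcd_dvd (Finset.mem_Icc.mpr ⟨hkpos, hk⟩)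
  have hG2 : ∀ t : ℕ, j < t → t ≤ n → G2 ∣ i n - i t := by
    intro t h1 h2
    rcases eq_or_lt_of_le h2 with rfl | h
    · simp
    · exact Finset.gcd_dvd (Finset.mem_Ioo.mpr ⟨h1, h⟩)
  have hG1nn : 0 ≤ G1 := Int.nonneg_of_normalize_eq_self Finset.normalize_gcd
  have hG2nn : 0 ≤ G2 := Int.nonneg_of_normalize_eq_self Finset.normalize_gcd
  have hcol0A : ∀ k : ℕ, k ≤ j → (if k < j then i k else i j) = i k := by
    intro k hk; split_ifs with h
    · rfl
    · have : k = j := by omega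
      rw [this]
  have hcol1A : ∀ k : ℕ, k ≤ j → (if k < j + 1 then i k else i (j+1)) = i k :=
    fun k hk => if_pos (by omega)
  have hcol0B : ∀ k : ℕ, j < k → (if k < j then i k else i j) = i j :=
    fun k hk => if_neg (by omega)
  have hcol1B : ∀ k : ℕ, j < k → (if k < j + 1 then i k else i (j+1)) = i (j+1) :=
    fun k hk => if_neg (by omega)
  subst hM
  constructor
  · -- 4x4 part
    apply Int.dvd_antisymm (Int.nonneg_of_normalize_eq_self Finset.normalize_gcd)
      (mul_nonneg (mul_nonneg hD.le hG1nn) hG2nn)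
    · -- gcd ∣ RHS
      have step1 : ∀ t ∈ Finset.Ioo j n,
          Finset.gcd Finset.univ
            (fun r : Fin 4 → Fin (n + 1) => (Matrix.of fun s t' =>
              (fun k : Fin (n + 1) =>
                ![if (k : ℕ) < j then i (k : ℕ) else i j,
                  if (k : ℕ) < j + 1 then i (k : ℕ) else i (j + 1),
                  1, i (k : ℕ)]) (r s) t').det)
          ∣ ((i (j + 1) - i j) * G1) * (i n - i t) := by
        intro t ht
        obtain ⟨ht1, ht2⟩ := Finset.mem_Ioo.mp ht
        have step0 : ∀ k ∈ Finset.Icc 1 j,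
            Finset.gcd Finset.univ
              (fun r : Fin 4 → Fin (n + 1) => (Matrix.of fun s t' =>
                (fun k : Fin (n + 1) =>
                  ![if (k : ℕ) < j then i (k : ℕ) else i j,
                    if (k : ℕ) < j + 1 then i (k : ℕ) else i (j + 1),
                    1, i (k : ℕ)]) (r s) t').det)
            ∣ ((i (j + 1) - i j) * (i n - i t)) * i k := by
          intro k hk
          obtain ⟨hk1, hk2⟩ := Finset.mem_Icc.mp hk
          set r : Fin 4 → Fin (n + 1) :=
            ![⟨0, by omega⟩, ⟨k, by omega⟩, ⟨t, by omega⟩, ⟨n, by omega⟩] with hrdef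
          have hr := Finset.gcd_dvd (f := fun r : Fin 4 → Fin (n + 1) =>
            (Matrix.of fun s t' =>
              (fun k : Fin (n + 1) =>
                ![if (k : ℕ) < j then i (k : ℕ) else i j,
                  if (k : ℕ) < j + 1 then i (k : ℕ) else i (j + 1),
                  1, i (k : ℕ)]) (r s) t').det) (Finset.mem_univ r)
          simp only [hrdef] at hr
          clear hrdef
          clear r
          rw [my_det_fin_four] at hr
          simp only [Matrix.of_apply, Matrix.cons_val_zero, Matrix.cons_val_one,
            Matrix.head_cons, Matrix.cons_val_two, Matrix.tail_cons,
            Matrix.cons_val_three, Fin.isValue] at hr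
          erw [hcol0A 0 (Nat.zero_le j), hcol1A 0 (Nat.zero_le j), hcol0A k hk2, hcol1A k hk2,
            hcol0B t ht1, hcol1B t ht1, hcol0B n (ht1.trans ht2), hcol1B n (ht1.trans ht2)] at hr
          exact dvd_of_eq_or_neg hr
            (by first | (left; simp only [hi0]; ring1) | (right; simp only [hi0]; ring1))
        have h2 := Finset.dvd_gcd step0
        rw [Finset.gcd_mul_left, Int.normalize_of_nonneg
          (mul_nonneg hD.le (sub_nonneg.mpr (hstrict t n ht2 le_rfl).le))] at h2
        exact dvd_of_eq_or_neg h2 (Or.inl (by ring))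
      have h3 := Finset.dvd_gcd step1
      rwa [Finset.gcd_mul_left, Int.normalize_of_nonneg (mul_nonneg hD.le hG1nn)] at h3
    · -- RHS ∣ gcd
      refine Finset.dvd_gcd fun r _ => ?_
      refine key (i (j+1) - i j) G1 G2 (i j) (i n) _ fun s => ?_
      rcases le_or_gt ((r s : ℕ)) j with hs | hs
      · left
        refine ⟨i (r s : ℕ), hG1 _ hs, ?_⟩
        funext t'
        fin_cases t' <;>
          simp only [Matrix.cons_val_zero, Matrix.cons_val_one, Matrix.head_cons,
            Matrix.cons_val_two, Matrix.tail_cons, Matrix.cons_val_three, Fin.isValue] <;>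
          rw [hcol0A _ hs] <;> rw [hcol1A _ hs]
      · right
        refine ⟨i (r s : ℕ) - i n,
          by simpa [neg_sub] using (dvd_neg.mpr (hG2 (r s : ℕ) hs (r s).is_le)), ?_⟩
        funext t'
        fin_cases t' <;>
          simp only [Matrix.cons_val_zero, Matrix.cons_val_one, Matrix.head_cons,
            Matrix.cons_val_two, Matrix.tail_cons, Matrix.cons_val_three, Fin.isValue] <;>
          rw [hcol0B _ hs] <;> rw [hcol1B _ hs] <;> ring
  · -- 2x2 part
    apply Int.dvd_antisymm (Int.nonneg_of_normalize_eq_self Finset.normalize_gcd)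
      (mul_nonneg hD.le hG1nn)
    · -- gcd ∣ RHS
      have step0 : ∀ k ∈ Finset.Icc 1 j,
          Finset.gcd Finset.univ
            (fun p : Fin (n + 1) × Fin (n + 1) =>
              (fun k : Fin (n + 1) =>
                ![if (k : ℕ) < j then i (k : ℕ) else i j,
                  if (k : ℕ) < j + 1 then i (k : ℕ) else i (j + 1),
                  1, i (k : ℕ)]) p.1 0 *
              (fun k : Fin (n + 1) =>
                ![if (k : ℕ) < j then i (k : ℕ) else i j,
                  if (k : ℕ) < j + 1 then i (k : ℕ) else i (j + 1),
                  1, i (k : ℕ)]) p.2 1 -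
              (fun k : Fin (n + 1) =>
                ![if (k : ℕ) < j then i (k : ℕ) else i j,
                  if (k : ℕ) < j + 1 then i (k : ℕ) else i (j + 1),
                  1, i (k : ℕ)]) p.2 0 *
              (fun k : Fin (n + 1) =>
                ![if (k : ℕ) < j then i (k : ℕ) else i j,
                  if (k : ℕ) < j + 1 then i (k : ℕ) else i (j + 1),
                  1, i (k : ℕ)]) p.1 1)
          ∣ (i (j + 1) - i j) * i k := by
        intro k hk
        obtain ⟨hk1, hk2⟩ := Finset.mem_Icc.mp hk
        have hr := Finset.gcd_dvd (f := fun p : Fin (n + 1) × Fin (n + 1) =>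
              (fun k : Fin (n + 1) =>
                ![if (k : ℕ) < j then i (k : ℕ) else i j,
                  if (k : ℕ) < j + 1 then i (k : ℕ) else i (j + 1),
                  1, i (k : ℕ)]) p.1 0 *
              (fun k : Fin (n + 1) =>
                ![if (k : ℕ) < j then i (k : ℕ) else i j,
                  if (k : ℕ) < j + 1 then i (k : ℕ) else i (j + 1),
                  1, i (k : ℕ)]) p.2 1 -
              (fun k : Fin (n + 1) =>
                ![if (k : ℕ) < j then i (k : ℕ) else i j,
                  if (k : ℕ) < j + 1 then i (k : ℕ) else i (j + 1),
                  1, i (k : ℕ)]) p.2 0 *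
              (fun k : Fin (n + 1) =>
                ![if (k : ℕ) < j then i (k : ℕ) else i j,
                  if (k : ℕ) < j + 1 then i (k : ℕ) else i (j + 1),
                  1, i (k : ℕ)]) p.1 1)
          (Finset.mem_univ ((⟨k, by omega⟩ : Fin (n+1)), (⟨n, by omega⟩ : Fin (n+1))))
        simp only [Matrix.cons_val_zero, Matrix.cons_val_one, Matrix.head_cons,
          Fin.isValue] at hr
        rw [hcol0A k hk2, hcol1A k hk2, hcol0B n hjn', hcol1B n hjn'] at hr
        exact dvd_of_eq_or_neg hr (by first | (left; ring1) | (right; ring1))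
      have h2 := Finset.dvd_gcd step0
      rwa [Finset.gcd_mul_left, Int.normalize_of_nonneg hD.le] at h2
    · -- RHS ∣ gcd
      refine Finset.dvd_gcd fun p _ => ?_
      simp only [Matrix.cons_val_zero, Matrix.cons_val_one, Matrix.head_cons, Fin.isValue]
      rcases le_or_gt ((p.1 : ℕ)) j with h1 | h1 <;> rcases le_or_gt ((p.2 : ℕ)) j with h2 | h2
      · rw [hcol0A _ h1, hcol0A _ h2, hcol1A _ h1, hcol1A _ h2]
        exact dvd_of_eq_or_neg (dvd_zero _) (Or.inl (by ring1))
      · rw [hcol0A _ h1, hcol0B _ h2, hcol1A _ h1, hcol1B _ h2]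
        exact dvd_of_eq_or_neg (mul_dvd_mul_left (i (j+1) - i j) (hG1 _ h1))
          (by first | (left; ring1) | (right; ring1))
      · rw [hcol0B _ h1, hcol0A _ h2, hcol1B _ h1, hcol1A _ h2]
        exact dvd_of_eq_or_neg (mul_dvd_mul_left (i (j+1) - i j) (hG1 _ h2))
          (by first | (left; ring1) | (right; ring1))
      · rw [hcol0B _ h1, hcol0B _ h2, hcol1B _ h1, hcol1B _ h2]
        exact dvd_of_eq_or_neg (dvd_zero _) (Or.inl (by ring1))
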